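/- Let G be a D-regular Bonnet-Myers sharp graph of diameter L. Then for every edge x~y, the number of triangles containing the edge x~y is at least 2D/L − 2. -/

import Mathlib

open Finset

namespace BMS

open scoped Classical

variable {V : Type*}

/-- The uniform probability measure on the closed 1-ball of `x` in a `D`-regular graph. -/
noncomputable def mu (G : SimpleGraph V) (D : ℕ) (x : V) : V → ℝ :=
  fun v => if G.dist x v ≤ 1 then 1 / (D + 1) else 0

/-- The L¹-Wasserstein distance between `μ_x` and `μ_y`, as an infimum over transport plans. -/
noncomputable def W1 (G : SimpleGraph V) [Fintype V] (D : ℕ) (x y : V) : ℝ :=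
  sInf { c : ℝ | ∃ π : V → V → ℝ,
    (∀ u v, 0 ≤ π u v) ∧
    (∀ u, ∑ v, π u v = mu G D x u) ∧
    (∀ v, ∑ u, π u v = mu G D y v) ∧
    c = ∑ u, ∑ v, (G.dist u v : ℝ) * π u v }

/-- Ollivier Ricci curvature (Lin–Lu–Yau normalization for regular graphs). -/
noncomputable def kappa (G : SimpleGraph V) [Fintype V] (D : ℕ) (x y : V) : ℝ :=
  ((D + 1) / D) * (1 - W1 G D x y)

/-- `G` is Bonnet–Myers sharp: the infimum of the curvature over edges equals `2 / L`. -/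
def BMSharp (G : SimpleGraph V) [Fintype V] (D L : ℕ) : Prop :=
  sInf { k : ℝ | ∃ x y, G.Adj x y ∧ k = kappa G D x y } = 2 / (L : ℝ)

/-- Number of neighbors of `y` at distance `k` from `x0`. -/
noncomputable def sphDeg (G : SimpleGraph V) [Fintype V] (x0 y : V) (k : ℕ) : ℕ :=
  (Finset.univ.filter (fun v => G.Adj y v ∧ G.dist x0 v = k)).card

/-- Number of triangles containing the edge `x ~ y` (common neighbors of `x` and `y`). -/
noncomputable def tri (G : SimpleGraph V) [Fintype V] (x y : V) : ℕ :=
  (Finset.univ.filter (fun v => G.Adj x v ∧ G.Adj y v)).card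

/-- A good optimal transport map from `B_1(a)` to `B_1(b)`: a bijection between the 1-balls,
fixing exactly the vertices of `B_1(a) ∩ B_1(b)` (among the domain), whose cost realizes
the Wasserstein distance `W1 (μ_a, μ_b)`. -/
def goodMap (G : SimpleGraph V) [Fintype V] (D : ℕ) (a b : V) (T : V → V) : Prop :=
  Set.BijOn T {v | G.dist a v ≤ 1} {v | G.dist b v ≤ 1} ∧
  (∀ v, G.dist a v ≤ 1 → (T v = v ↔ G.dist b v ≤ 1)) ∧
  (1 / (D + 1 : ℝ)) *
      ∑ v ∈ Finset.univ.filter (fun v => G.dist a v ≤ 1), (G.dist v (T v) : ℝ) =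
    W1 G D a b

lemma dist_le_one_iff [Fintype V] {G : SimpleGraph V} (hconn : G.Connected) (x v : V) :
    G.dist x v ≤ 1 ↔ v = x ∨ G.Adj x v := by
  rw [Nat.le_one_iff_eq_zero_or_eq_one, hconn.dist_eq_zero_iff,
    SimpleGraph.dist_eq_one_iff_adj, eq_comm]

lemma ball_eq [Fintype V] {G : SimpleGraph V} (hconn : G.Connected) (x : V) :
    Finset.univ.filter (fun v => G.dist x v ≤ 1) = insert x (G.neighborFinset x) := by
  ext v
  simp only [mem_filter, mem_univ, true_and, mem_insert, SimpleGraph.mem_neighborFinset,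
    dist_le_one_iff hconn]

lemma ball_card [Fintype V] {G : SimpleGraph V} (hconn : G.Connected) {D : ℕ}
    (hreg : G.IsRegularOfDegree D) (x : V) :
    (Finset.univ.filter (fun v => G.dist x v ≤ 1)).card = D + 1 := by
  rw [ball_eq hconn x, Finset.card_insert_of_notMem (by simp),
    G.card_neighborFinset_eq_degree, hreg x]

lemma mu_sum [Fintype V] {G : SimpleGraph V} (hconn : G.Connected) {D : ℕ}
    (hreg : G.IsRegularOfDegree D) (x : V) :
    ∑ u, mu G D x u = 1 := by
  unfold mu
  rw [← Finset.sum_filter, Finset.sum_const, ball_card hconn hreg x]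
  have : ((D : ℝ) + 1) ≠ 0 := by positivity
  simp only [nsmul_eq_mul, Nat.cast_add, Nat.cast_one]
  field_simp

lemma mu_nonneg (G : SimpleGraph V) (D : ℕ) (x v : V) : 0 ≤ mu G D x v := by
  unfold mu; positivity

section
variable [Fintype V] {G : SimpleGraph V} {D L : ℕ}

/-- the transport set -/
def TS (G : SimpleGraph V) [Fintype V] (D : ℕ) (x y : V) : Set ℝ :=
  { c : ℝ | ∃ π : V → V → ℝ,
    (∀ u v, 0 ≤ π u v) ∧
    (∀ u, ∑ v, π u v = mu G D x u) ∧
    (∀ v, ∑ u, π u v = mu G D y v) ∧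
    c = ∑ u, ∑ v, (G.dist u v : ℝ) * π u v }

lemma W1_eq (x y : V) : W1 G D x y = sInf (TS G D x y) := rfl

lemma TS_nonneg {x y : V} {c : ℝ} (hc : c ∈ TS G D x y) : 0 ≤ c := by
  obtain ⟨π, hpos, -, -, rfl⟩ := hc
  refine Finset.sum_nonneg fun u _ => Finset.sum_nonneg fun v _ => ?_
  have := hpos u v
  positivity

lemma TS_bdd (x y : V) : BddBelow (TS G D x y) := ⟨0, fun c hc => TS_nonneg hc⟩

lemma prod_mem (hconn : G.Connected) (hreg : G.IsRegularOfDegree D) (x y : V) :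
    (∑ u, ∑ v, (G.dist u v : ℝ) * (mu G D x u * mu G D y v)) ∈ TS G D x y := by
  refine ⟨fun u v => mu G D x u * mu G D y v, ?_, ?_, ?_, rfl⟩
  · intro u v; exact mul_nonneg (mu_nonneg _ _ _ _) (mu_nonneg _ _ _ _)
  · intro u; rw [← Finset.mul_sum, mu_sum hconn hreg, mul_one]
  · intro v
    rw [← Finset.sum_mul, mu_sum hconn hreg, one_mul]

lemma TS_nonempty (hconn : G.Connected) (hreg : G.IsRegularOfDegree D) (x y : V) :
    (TS G D x y).Nonempty := ⟨_, prod_mem hconn hreg x y⟩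

lemma W1_le (hconn : G.Connected) (hreg : G.IsRegularOfDegree D)
    (hL : 0 < L) (hdiam : G.diam = L) (x y : V) : W1 G D x y ≤ L := by
  rw [W1_eq]
  refine le_trans (csInf_le (TS_bdd x y) (prod_mem hconn hreg x y)) ?_
  have hdle : ∀ u v : V, (G.dist u v : ℝ) ≤ L := by
    intro u v
    have h1 : G.dist u v ≤ G.diam :=
      SimpleGraph.dist_le_diam (SimpleGraph.ediam_ne_top_of_diam_ne_zero (by omega))
    exact_mod_cast hdiam ▸ h1
  calc ∑ u, ∑ v, (G.dist u v : ℝ) * (mu G D x u * mu G D y v)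
      ≤ ∑ u, ∑ v, (L : ℝ) * (mu G D x u * mu G D y v) := by
        refine Finset.sum_le_sum fun u _ => Finset.sum_le_sum fun v _ => ?_
        exact mul_le_mul_of_nonneg_right (hdle u v)
          (mul_nonneg (mu_nonneg _ _ _ _) (mu_nonneg _ _ _ _))
    _ = L := by
        simp_rw [← Finset.mul_sum]
        simp [mu_sum hconn hreg]

lemma overlap_card (hconn : G.Connected) {x y : V} (hxy : G.Adj x y) :
    (Finset.univ.filter (fun u => G.dist x u ≤ 1 ∧ G.dist y u ≤ 1)).card ≤ tri G x y + 2 := by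
  have hsub : (Finset.univ.filter (fun u => G.dist x u ≤ 1 ∧ G.dist y u ≤ 1)) ⊆
      insert x (insert y (Finset.univ.filter (fun v => G.Adj x v ∧ G.Adj y v))) := by
    intro u hu
    simp only [mem_filter, mem_univ, true_and, dist_le_one_iff hconn] at hu
    simp only [mem_insert, mem_filter, mem_univ, true_and]
    rcases hu with ⟨h1 | h1, h2 | h2⟩
    · exact Or.inl h1
    · exact Or.inl h1
    · exact Or.inr (Or.inl h2)
    · exact Or.inr (Or.inr ⟨h1, h2⟩)
  calc _ ≤ _ := Finset.card_le_card hsub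
    _ ≤ tri G x y + 2 := by
        refine le_trans (Finset.card_insert_le _ _) ?_
        have := Finset.card_insert_le y (Finset.univ.filter (fun v => G.Adj x v ∧ G.Adj y v))
        unfold tri
        omega

lemma W1_ge (hconn : G.Connected) (hreg : G.IsRegularOfDegree D) {x y : V} (hxy : G.Adj x y) :
    1 - ((tri G x y : ℝ) + 2) / (D + 1) ≤ W1 G D x y := by
  rw [W1_eq]
  refine le_csInf (TS_nonempty hconn hreg x y) ?_
  rintro c ⟨π, hpos, hrow, hcol, rfl⟩
  -- diagonal bound
  have hdiag : ∀ u : V, π u u ≤ (if G.dist x u ≤ 1 ∧ G.dist y u ≤ 1 then (1 : ℝ) / (D + 1) else 0) := by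
    intro u
    have h1 : π u u ≤ mu G D x u := by
      rw [← hrow u]
      exact Finset.single_le_sum (fun v _ => hpos u v) (Finset.mem_univ u)
    have h2 : π u u ≤ mu G D y u := by
      rw [← hcol u]
      exact Finset.single_le_sum (fun v _ => hpos v u) (Finset.mem_univ u)
    unfold mu at h1 h2
    split_ifs with h
    · simpa [h.1] using h1
    · rw [not_and_or] at h
      rcases h with h | h
      · simpa [h] using h1
      · simpa [h] using h2
  have hdiagsum : ∑ u, π u u ≤ ((tri G x y : ℝ) + 2) / (D + 1) := by
    calc ∑ u, π u u
        ≤ ∑ u, (if G.dist x u ≤ 1 ∧ G.dist y u ≤ 1 then (1 : ℝ) / (D + 1) else 0) :=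
          Finset.sum_le_sum fun u _ => hdiag u
      _ = ((Finset.univ.filter (fun u => G.dist x u ≤ 1 ∧ G.dist y u ≤ 1)).card : ℝ) / (D + 1) := by
          rw [← Finset.sum_filter, Finset.sum_const, nsmul_eq_mul]
          ring
      _ ≤ ((tri G x y : ℝ) + 2) / (D + 1) := by
          apply div_le_div_of_nonneg_right ?_ (by positivity) |>.trans_eq rfl
          exact_mod_cast overlap_card hconn hxy
  have hmass : ∑ u, ∑ v, π u v = 1 := by
    simp_rw [hrow]; exact mu_sum hconn hreg x
  have key : ∀ u : V, (∑ v, π u v) - π u u ≤ ∑ v, (G.dist u v : ℝ) * π u v := by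
    intro u
    have e1 : ∑ v, π u v = π u u + ∑ v ∈ Finset.univ.erase u, π u v :=
      (Finset.add_sum_erase Finset.univ (π u) (Finset.mem_univ u)).symm
    have e2 : ∑ v ∈ Finset.univ.erase u, π u v ≤
        ∑ v ∈ Finset.univ.erase u, (G.dist u v : ℝ) * π u v := by
      refine Finset.sum_le_sum fun v hv => ?_
      have hne : u ≠ v := fun h => (Finset.mem_erase.mp hv).1 h.symm
      have hd : (1 : ℝ) ≤ (G.dist u v : ℝ) := by
        exact_mod_cast hconn.pos_dist_of_ne hne
      nlinarith [hpos u v]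
    have e3 : ∑ v ∈ Finset.univ.erase u, (G.dist u v : ℝ) * π u v ≤
        ∑ v, (G.dist u v : ℝ) * π u v := by
      refine Finset.sum_le_sum_of_subset_of_nonneg (Finset.subset_univ _) fun v _ _ => ?_
      have := hpos u v
      positivity
    linarith
  have keysum : (∑ u, ∑ v, π u v) - ∑ u, π u u ≤ ∑ u, ∑ v, (G.dist u v : ℝ) * π u v := by
    rw [← Finset.sum_sub_distrib]
    exact Finset.sum_le_sum fun u _ => key u
  have := hdiagsum
  linarith [key, hmass, hdiagsum]

end

theorem stmt [Fintype V] (G : SimpleGraph V) (hconn : G.Connected)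
    (D L : ℕ) (hD : 0 < D) (hL : 0 < L) (hreg : G.IsRegularOfDegree D)
    (hdiam : G.diam = L) (hBM : BMSharp G D L) :
    ∀ x y : V, G.Adj x y → 2 * (D : ℝ) / L - 2 ≤ (tri G x y : ℝ) := by
  intro x y hxy
  have hDpos : (0:ℝ) < D := by exact_mod_cast hD
  have hLpos : (0:ℝ) < L := by exact_mod_cast hL
  have hbdd : BddBelow { k : ℝ | ∃ a b, G.Adj a b ∧ k = kappa G D a b } := by
    refine ⟨(((D:ℝ)+1)/D) * (1 - L), ?_⟩
    rintro k ⟨a, b, hab, rfl⟩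
    unfold kappa
    have h := W1_le hconn hreg hL hdiam a b
    have hpos : (0:ℝ) < ((D:ℝ)+1)/D := by positivity
    nlinarith
  have hmem : kappa G D x y ∈ { k : ℝ | ∃ a b, G.Adj a b ∧ k = kappa G D a b } :=
    ⟨x, y, hxy, rfl⟩
  have h1 : 2 / (L:ℝ) ≤ kappa G D x y := hBM ▸ csInf_le hbdd hmem
  have h2 : kappa G D x y ≤ ((tri G x y : ℝ) + 2) / D := by
    unfold kappa
    have hw := W1_ge (D := D) hconn hreg hxy
    have hle : 1 - W1 G D x y ≤ ((tri G x y : ℝ) + 2) / (D + 1) := by linarith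
    calc (((D:ℝ)+1)/D) * (1 - W1 G D x y)
        ≤ (((D:ℝ)+1)/D) * (((tri G x y : ℝ) + 2) / (D + 1)) :=
          mul_le_mul_of_nonneg_left hle (by positivity)
      _ = ((tri G x y : ℝ) + 2) / D := by
          field_simp
  have h3 : 2 / (L:ℝ) ≤ ((tri G x y : ℝ) + 2) / D := le_trans h1 h2
  rw [div_le_div_iff₀ hLpos hDpos] at h3
  rw [sub_le_iff_le_add, div_le_iff₀ hLpos]
  linarith


end BMS
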